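/- Consider the configuration-model mean-field system with inertia δ = 0 and suppose α·f_min > β·e_max (sufficiently strong in-group love relative to out-group hate). Let c be a real number with 0 ≤ c < 1/2. Then every solution of the system on [0, ∞) with θ^B_{f,e}(0) = θ^R_{f,e}(0) = c for all (f,e) ∈ I satisfies θ^B_{f,e}(t) → 0 and θ^R_{f,e}(t) → 0 as t → ∞, for every (f,e) ∈ I (consensus on the initially more popular choice in every degree bin of both groups). -/

import Mathlib

open Set Filter
open Topology

/-- Friend-weighted fraction with choice-1:
`P_F(t) = (Σ_{(f,e)} f·P_{f,e}·θ_{f,e}(t)) / (Σ_{(f,e)} f·P_{f,e})`,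
where `(f,e)` ranges over the index set `[fmin, fmax] × [emin, emax]`. -/
noncomputable def cfgPF (fmin fmax emin emax : ℕ) (P : ℕ → ℕ → ℝ)
    (θ : ℕ → ℕ → ℝ → ℝ) (t : ℝ) : ℝ :=
  (∑ f ∈ Finset.Icc fmin fmax, ∑ e ∈ Finset.Icc emin emax, (f : ℝ) * P f e * θ f e t) /
    (∑ f ∈ Finset.Icc fmin fmax, ∑ e ∈ Finset.Icc emin emax, (f : ℝ) * P f e)

/-- Enemy-weighted fraction with choice-1:
`P_E(t) = (Σ_{(f,e)} e·P_{f,e}·θ_{f,e}(t)) / (Σ_{(f,e)} e·P_{f,e})`. -/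
noncomputable def cfgPE (fmin fmax emin emax : ℕ) (P : ℕ → ℕ → ℝ)
    (θ : ℕ → ℕ → ℝ → ℝ) (t : ℝ) : ℝ :=
  (∑ f ∈ Finset.Icc fmin fmax, ∑ e ∈ Finset.Icc emin emax, (e : ℝ) * P f e * θ f e t) /
    (∑ f ∈ Finset.Icc fmin fmax, ∑ e ∈ Finset.Icc emin emax, (e : ℝ) * P f e)

/-- `g^B_{f,e}(t) = α·(f/(f+e))·(2P_F^B(t)−1) − β·(e/(f+e))·(2P_E^B(t)−1)`, where
`P_F^B` is the friend-weighted blue fraction and `P_E^B` the enemy-weighted red fraction. -/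
noncomputable def cfgGB (fmin fmax emin emax : ℕ) (PB PR : ℕ → ℕ → ℝ)
    (θB θR : ℕ → ℕ → ℝ → ℝ) (α β : ℝ) (f e : ℕ) (t : ℝ) : ℝ :=
  α * ((f : ℝ) / ((f : ℝ) + (e : ℝ))) * (2 * cfgPF fmin fmax emin emax PB θB t - 1)
    - β * ((e : ℝ) / ((f : ℝ) + (e : ℝ))) * (2 * cfgPE fmin fmax emin emax PR θR t - 1)

/-- `g^R_{f,e}(t) = α·(f/(f+e))·(2P_F^R(t)−1) − β·(e/(f+e))·(2P_E^R(t)−1)`, where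
`P_F^R` is the friend-weighted red fraction and `P_E^R` the enemy-weighted blue fraction. -/
noncomputable def cfgGR (fmin fmax emin emax : ℕ) (PB PR : ℕ → ℕ → ℝ)
    (θB θR : ℕ → ℕ → ℝ → ℝ) (α β : ℝ) (f e : ℕ) (t : ℝ) : ℝ :=
  α * ((f : ℝ) / ((f : ℝ) + (e : ℝ))) * (2 * cfgPF fmin fmax emin emax PR θR t - 1)
    - β * ((e : ℝ) / ((f : ℝ) + (e : ℝ))) * (2 * cfgPE fmin fmax emin emax PB θB t - 1)

/-- Right-hand side of the blue equation in bin `(f,e)`: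
`(1−θ^B_{f,e})·𝟙[g^B_{f,e}(t) > 0] − θ^B_{f,e}·𝟙[g^B_{f,e}(t) < 0]`. -/
noncomputable def cfgRhsB (fmin fmax emin emax : ℕ) (PB PR : ℕ → ℕ → ℝ)
    (θB θR : ℕ → ℕ → ℝ → ℝ) (α β : ℝ) (f e : ℕ) (t : ℝ) : ℝ :=
  (1 - θB f e t) * (if 0 < cfgGB fmin fmax emin emax PB PR θB θR α β f e t then 1 else 0)
    - θB f e t * (if cfgGB fmin fmax emin emax PB PR θB θR α β f e t < 0 then 1 else 0)

/-- Right-hand side of the red equation in bin `(f,e)`: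
`(1−θ^R_{f,e})·𝟙[g^R_{f,e}(t) > 0] − θ^R_{f,e}·𝟙[g^R_{f,e}(t) < 0]`. -/
noncomputable def cfgRhsR (fmin fmax emin emax : ℕ) (PB PR : ℕ → ℕ → ℝ)
    (θB θR : ℕ → ℕ → ℝ → ℝ) (α β : ℝ) (f e : ℕ) (t : ℝ) : ℝ :=
  (1 - θR f e t) * (if 0 < cfgGR fmin fmax emin emax PB PR θB θR α β f e t then 1 else 0)
    - θR f e t * (if cfgGR fmin fmax emin emax PB PR θB θR α β f e t < 0 then 1 else 0)

/-- The family `(θ^B_{f,e}, θ^R_{f,e})_{(f,e) ∈ [fmin,fmax] × [emin,emax]}` is a solution of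
the configuration-model mean-field system (inertia `δ = 0`) on the set `J`. -/
def IsCfgSolutionOn (fmin fmax emin emax : ℕ) (PB PR : ℕ → ℕ → ℝ)
    (θB θR : ℕ → ℕ → ℝ → ℝ) (α β : ℝ) (J : Set ℝ) : Prop :=
  ∀ f ∈ Finset.Icc fmin fmax, ∀ e ∈ Finset.Icc emin emax, ∀ t ∈ J,
    HasDerivWithinAt (θB f e)
      (cfgRhsB fmin fmax emin emax PB PR θB θR α β f e t) J t ∧
    HasDerivWithinAt (θR f e)
      (cfgRhsR fmin fmax emin emax PB PR θB θR α β f e t) J t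


/-- Weighted average of constant values is that constant. -/
lemma cfg_avg_const (fmin fmax emin emax : ℕ) (w : ℕ → ℕ → ℝ)
    (hw : ∀ f ∈ Finset.Icc fmin fmax, ∀ e ∈ Finset.Icc emin emax, 0 < w f e)
    (hne1 : fmin ≤ fmax) (hne2 : emin ≤ emax)
    (θ : ℕ → ℕ → ℝ → ℝ) (t v : ℝ)
    (hθ : ∀ f ∈ Finset.Icc fmin fmax, ∀ e ∈ Finset.Icc emin emax, θ f e t = v) :
    (∑ f ∈ Finset.Icc fmin fmax, ∑ e ∈ Finset.Icc emin emax, w f e * θ f e t) /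
      (∑ f ∈ Finset.Icc fmin fmax, ∑ e ∈ Finset.Icc emin emax, w f e) = v := by
  have hD : 0 < ∑ f ∈ Finset.Icc fmin fmax, ∑ e ∈ Finset.Icc emin emax, w f e := by
    refine Finset.sum_pos (fun f hf => Finset.sum_pos (fun e he => hw f hf e he) ?_) ?_
    · exact Finset.nonempty_Icc.mpr hne2
    · exact Finset.nonempty_Icc.mpr hne1
  have hnum : (∑ f ∈ Finset.Icc fmin fmax, ∑ e ∈ Finset.Icc emin emax, w f e * θ f e t)
      = (∑ f ∈ Finset.Icc fmin fmax, ∑ e ∈ Finset.Icc emin emax, w f e) * v := by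
    rw [Finset.sum_mul]
    refine Finset.sum_congr rfl fun f hf => ?_
    rw [Finset.sum_mul]
    exact Finset.sum_congr rfl fun e he => by rw [hθ f hf e he]
  rw [hnum, mul_comm, mul_div_assoc, div_self hD.ne', mul_one]

/-- In the configuration-model mean-field system with `δ = 0`, if
`α·f_min > β·e_max` and `θ^B_{f,e}(0) = θ^R_{f,e}(0) = c` for all bins with `0 ≤ c < 1/2`,
then every solution on `[0,∞)` satisfies `θ^B_{f,e}(t) → 0` and `θ^R_{f,e}(t) → 0`
for every bin `(f,e)` (consensus on the initially more popular choice). -/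
theorem cfg_consensus_to_zero
    (fmin fmax emin emax : ℕ)
    (hf1 : 1 ≤ fmin) (hf2 : fmin ≤ fmax) (he1 : 1 ≤ emin) (he2 : emin ≤ emax)
    (PB PR : ℕ → ℕ → ℝ)
    (hPB : ∀ f ∈ Finset.Icc fmin fmax, ∀ e ∈ Finset.Icc emin emax, 0 < PB f e)
    (hPR : ∀ f ∈ Finset.Icc fmin fmax, ∀ e ∈ Finset.Icc emin emax, 0 < PR f e)
    (α β : ℝ) (hα : α ∈ Set.Icc (0:ℝ) 1) (hβ : β ∈ Set.Icc (0:ℝ) 1)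
    (hdom : β * (emax : ℝ) < α * (fmin : ℝ))
    (c : ℝ) (hc1 : 0 ≤ c) (hc2 : c < 1 / 2)
    (θB θR : ℕ → ℕ → ℝ → ℝ)
    (hsol : IsCfgSolutionOn fmin fmax emin emax PB PR θB θR α β (Set.Ici 0))
    (h0 : ∀ f ∈ Finset.Icc fmin fmax, ∀ e ∈ Finset.Icc emin emax,
      θB f e 0 = c ∧ θR f e 0 = c) :
    ∀ f ∈ Finset.Icc fmin fmax, ∀ e ∈ Finset.Icc emin emax,
      Filter.Tendsto (θB f e) Filter.atTop (nhds (0:ℝ)) ∧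
      Filter.Tendsto (θR f e) Filter.atTop (nhds (0:ℝ)) := by
  
  classical
  set φ : ℝ → ℝ := fun t => c * Real.exp (-t) with hφdef
  have hφ0 : φ 0 = c := by simp [φ]
  have hφcont : Continuous φ := by fun_prop
  have hφlt : ∀ t : ℝ, 0 ≤ t → φ t < 1/2 := by
    intro t ht
    have h1 : Real.exp (-t) ≤ 1 := Real.exp_le_one_iff.mpr (by linarith)
    have h2 : φ t ≤ c := by
      have := mul_le_mul_of_nonneg_left h1 hc1
      simpa [φ] using this
    linarith
  have hφ' : ∀ t : ℝ, HasDerivAt φ (-(φ t)) t := by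
    intro t
    have h1 : HasDerivAt (fun s : ℝ => Real.exp (-s)) (Real.exp (-t) * (-1)) t :=
      (hasDerivAt_neg t).exp
    have h2 := h1.const_mul c
    have h3 : -(φ t) = c * (Real.exp (-t) * (-1)) := by
      show -(c * Real.exp (-t)) = c * (Real.exp (-t) * (-1)); ring
    rw [h3]
    exact h2
  -- continuity of the solutions
  have hθBc : ∀ f ∈ Finset.Icc fmin fmax, ∀ e ∈ Finset.Icc emin emax,
      ContinuousOn (θB f e) (Ici 0) := fun f hf e he t ht =>
    ((hsol f hf e he t ht).1).continuousWithinAt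
  have hθRc : ∀ f ∈ Finset.Icc fmin fmax, ∀ e ∈ Finset.Icc emin emax,
      ContinuousOn (θR f e) (Ici 0) := fun f hf e he t ht =>
    ((hsol f hf e he t ht).2).continuousWithinAt
  -- cast facts about bins
  have hfpos : ∀ f ∈ Finset.Icc fmin fmax, (1:ℝ) ≤ (f:ℝ) := by
    intro f hf
    have : 1 ≤ f := le_trans hf1 (Finset.mem_Icc.mp hf).1
    exact_mod_cast this
  have hepos : ∀ e ∈ Finset.Icc emin emax, (1:ℝ) ≤ (e:ℝ) := by
    intro e he
    have : 1 ≤ e := le_trans he1 (Finset.mem_Icc.mp he).1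
    exact_mod_cast this
  -- the equal-to-φ predicate
  set Q : ℝ → Prop := fun t => ∀ f ∈ Finset.Icc fmin fmax, ∀ e ∈ Finset.Icc emin emax,
    θB f e t = φ t ∧ θR f e t = φ t with hQdef
  have hQ0 : Q 0 := by
    intro f hf e he
    obtain ⟨h1, h2⟩ := h0 f hf e he
    exact ⟨by rw [h1, hφ0], by rw [h2, hφ0]⟩
  -- the four mean-field averages under Q
  have hPFB : ∀ t : ℝ, Q t → cfgPF fmin fmax emin emax PB θB t = φ t := by
    intro t hQ
    exact cfg_avg_const fmin fmax emin emax (fun f e => (f:ℝ) * PB f e)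
      (fun f hf e he => mul_pos (lt_of_lt_of_le one_pos (hfpos f hf)) (hPB f hf e he))
      hf2 he2 θB t (φ t) (fun f hf e he => (hQ f hf e he).1)
  have hPFR : ∀ t : ℝ, Q t → cfgPF fmin fmax emin emax PR θR t = φ t := by
    intro t hQ
    exact cfg_avg_const fmin fmax emin emax (fun f e => (f:ℝ) * PR f e)
      (fun f hf e he => mul_pos (lt_of_lt_of_le one_pos (hfpos f hf)) (hPR f hf e he))
      hf2 he2 θR t (φ t) (fun f hf e he => (hQ f hf e he).2)
  have hPEB : ∀ t : ℝ, Q t → cfgPE fmin fmax emin emax PB θB t = φ t := by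
    intro t hQ
    exact cfg_avg_const fmin fmax emin emax (fun f e => (e:ℝ) * PB f e)
      (fun f hf e he => mul_pos (lt_of_lt_of_le one_pos (hepos e he)) (hPB f hf e he))
      hf2 he2 θB t (φ t) (fun f hf e he => (hQ f hf e he).1)
  have hPER : ∀ t : ℝ, Q t → cfgPE fmin fmax emin emax PR θR t = φ t := by
    intro t hQ
    exact cfg_avg_const fmin fmax emin emax (fun f e => (e:ℝ) * PR f e)
      (fun f hf e he => mul_pos (lt_of_lt_of_le one_pos (hepos e he)) (hPR f hf e he))
      hf2 he2 θR t (φ t) (fun f hf e he => (hQ f hf e he).2)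
  -- negativity of the drives under Q
  have hG : ∀ t : ℝ, 0 ≤ t → Q t → ∀ f ∈ Finset.Icc fmin fmax, ∀ e ∈ Finset.Icc emin emax,
      cfgGB fmin fmax emin emax PB PR θB θR α β f e t < 0 ∧
      cfgGR fmin fmax emin emax PB PR θB θR α β f e t < 0 := by
    intro t ht hQ f hf e he
    have hf1' := hfpos f hf
    have he1' := hepos e he
    have hfe : (0:ℝ) < (f:ℝ) + (e:ℝ) := by linarith
    have hX : 2 * φ t - 1 < 0 := by have := hφlt t ht; linarith
    have hcoef : 0 < α * (f:ℝ) - β * (e:ℝ) := by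
      have hc1' : (fmin:ℝ) ≤ (f:ℝ) := by exact_mod_cast (Finset.mem_Icc.mp hf).1
      have hc2' : (e:ℝ) ≤ (emax:ℝ) := by exact_mod_cast (Finset.mem_Icc.mp he).2
      have h1 : α * (fmin:ℝ) ≤ α * (f:ℝ) := mul_le_mul_of_nonneg_left hc1' hα.1
      have h2 : β * (e:ℝ) ≤ β * (emax:ℝ) := mul_le_mul_of_nonneg_left hc2' hβ.1
      linarith
    constructor
    · have hB : cfgGB fmin fmax emin emax PB PR θB θR α β f e t
          = (α * (f:ℝ) - β * (e:ℝ)) / ((f:ℝ) + (e:ℝ)) * (2 * φ t - 1) := by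
        unfold cfgGB
        rw [hPFB t hQ, hPER t hQ]
        field_simp
      rw [hB]
      exact mul_neg_of_pos_of_neg (div_pos hcoef hfe) hX
    · have hR : cfgGR fmin fmax emin emax PB PR θB θR α β f e t
          = (α * (f:ℝ) - β * (e:ℝ)) / ((f:ℝ) + (e:ℝ)) * (2 * φ t - 1) := by
        unfold cfgGR
        rw [hPFR t hQ, hPEB t hQ]
        field_simp
      rw [hR]
      exact mul_neg_of_pos_of_neg (div_pos hcoef hfe) hX
  -- continuity of the drives
  have hPFcont : ∀ (P : ℕ → ℕ → ℝ) (θ : ℕ → ℕ → ℝ → ℝ),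
      (∀ f ∈ Finset.Icc fmin fmax, ∀ e ∈ Finset.Icc emin emax, ContinuousOn (θ f e) (Ici 0)) →
      ContinuousOn (cfgPF fmin fmax emin emax P θ) (Ici 0) := by
    intro P θ hθ t ht
    unfold cfgPF
    apply ContinuousWithinAt.div_const
    apply tendsto_finset_sum
    intro f hf
    apply tendsto_finset_sum
    intro e he
    exact (hθ f hf e he t ht).const_mul _
  have hPEcont : ∀ (P : ℕ → ℕ → ℝ) (θ : ℕ → ℕ → ℝ → ℝ),
      (∀ f ∈ Finset.Icc fmin fmax, ∀ e ∈ Finset.Icc emin emax, ContinuousOn (θ f e) (Ici 0)) →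
      ContinuousOn (cfgPE fmin fmax emin emax P θ) (Ici 0) := by
    intro P θ hθ t ht
    unfold cfgPE
    apply ContinuousWithinAt.div_const
    apply tendsto_finset_sum
    intro f hf
    apply tendsto_finset_sum
    intro e he
    exact (hθ f hf e he t ht).const_mul _
  have hGBcont : ∀ (f e : ℕ),
      ContinuousOn (cfgGB fmin fmax emin emax PB PR θB θR α β f e) (Ici 0) := by
    intro f e
    have h1 := hPFcont PB θB hθBc
    have h2 := hPEcont PR θR hθRc
    unfold cfgGB
    exact (continuousOn_const.mul ((continuousOn_const.mul h1).sub continuousOn_const)).sub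
      (continuousOn_const.mul ((continuousOn_const.mul h2).sub continuousOn_const))
  have hGRcont : ∀ (f e : ℕ),
      ContinuousOn (cfgGR fmin fmax emin emax PB PR θB θR α β f e) (Ici 0) := by
    intro f e
    have h1 := hPFcont PR θR hθRc
    have h2 := hPEcont PB θB hθBc
    unfold cfgGR
    exact (continuousOn_const.mul ((continuousOn_const.mul h1).sub continuousOn_const)).sub
      (continuousOn_const.mul ((continuousOn_const.mul h2).sub continuousOn_const))
  -- the main claim: Q holds on all of [0, ∞)
  have hall : ∀ t ∈ Ici (0:ℝ), Q t := by
    by_contra hno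
    push_neg at hno
    obtain ⟨t₀, ht₀, hQt₀⟩ := hno
    set B : Set ℝ := {t | 0 ≤ t ∧ ¬ Q t} with hBdef
    have hBne : B.Nonempty := ⟨t₀, ht₀, hQt₀⟩
    have hBbd : BddBelow B := ⟨0, fun t ht => ht.1⟩
    set T := sInf B with hTdef
    have hT0 : 0 ≤ T := le_csInf hBne fun t ht => ht.1
    have hbefore : ∀ t, 0 ≤ t → t < T → Q t := by
      intro t ht hlt
      by_contra hq
      exact absurd (csInf_le hBbd ⟨ht, hq⟩) (not_le.mpr hlt)
    have hQT : Q T := by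
      rcases eq_or_lt_of_le hT0 with h | h
      · rw [← h]; exact hQ0
      · intro f hf e he
        have hne : (𝓝[Ico (0:ℝ) T] T).NeBot := by
          apply mem_closure_iff_nhdsWithin_neBot.mp
          rw [closure_Ico h.ne]
          exact ⟨hT0, le_rfl⟩
        have hsub : Ico (0:ℝ) T ⊆ Ici 0 := fun x hx => hx.1
        have hev : ∀ᶠ x in 𝓝[Ico (0:ℝ) T] T, θB f e x = φ x ∧ θR f e x = φ x := by
          filter_upwards [self_mem_nhdsWithin] with x hx
          exact hbefore x hx.1 hx.2 f hf e he
        have tφ : Tendsto φ (𝓝[Ico (0:ℝ) T] T) (𝓝 (φ T)) := hφcont.continuousWithinAt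
        have tB1 : Tendsto (θB f e) (𝓝[Ico (0:ℝ) T] T) (𝓝 (θB f e T)) :=
          (hθBc f hf e he T hT0).mono hsub
        have tR1 : Tendsto (θR f e) (𝓝[Ico (0:ℝ) T] T) (𝓝 (θR f e T)) :=
          (hθRc f hf e he T hT0).mono hsub
        have tB2 : Tendsto (θB f e) (𝓝[Ico (0:ℝ) T] T) (𝓝 (φ T)) :=
          Tendsto.congr' (by filter_upwards [hev] with x hx using hx.1.symm) tφ
        have tR2 : Tendsto (θR f e) (𝓝[Ico (0:ℝ) T] T) (𝓝 (φ T)) :=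
          Tendsto.congr' (by filter_upwards [hev] with x hx using hx.2.symm) tφ
        exact ⟨tendsto_nhds_unique tB1 tB2, tendsto_nhds_unique tR1 tR2⟩
    -- all drives are negative in a right neighbourhood of T
    have hevG : ∀ᶠ t in 𝓝[Ici (0:ℝ)] T, ∀ f ∈ Finset.Icc fmin fmax,
        ∀ e ∈ Finset.Icc emin emax,
        cfgGB fmin fmax emin emax PB PR θB θR α β f e t < 0 ∧
        cfgGR fmin fmax emin emax PB PR θB θR α β f e t < 0 := by
      rw [eventually_all_finset]
      intro f hf
      rw [eventually_all_finset]
      intro e he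
      obtain ⟨hgB, hgR⟩ := hG T hT0 hQT f hf e he
      have e1 : ∀ᶠ t in 𝓝[Ici (0:ℝ)] T,
          cfgGB fmin fmax emin emax PB PR θB θR α β f e t < 0 := by
        have := (hGBcont f e T hT0) (Iio_mem_nhds hgB)
        filter_upwards [this] with x hx using hx
      have e2 : ∀ᶠ t in 𝓝[Ici (0:ℝ)] T,
          cfgGR fmin fmax emin emax PB PR θB θR α β f e t < 0 := by
        have := (hGRcont f e T hT0) (Iio_mem_nhds hgR)
        filter_upwards [this] with x hx using hx
      exact e1.and e2
    rw [Filter.eventually_iff, Metric.mem_nhdsWithin_iff] at hevG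
    obtain ⟨ε, hε, hball⟩ := hevG
    have hb : T < T + ε/2 := by linarith
    have hIccsub : ∀ x ∈ Icc T (T + ε/2), ∀ f ∈ Finset.Icc fmin fmax,
        ∀ e ∈ Finset.Icc emin emax,
        cfgGB fmin fmax emin emax PB PR θB θR α β f e x < 0 ∧
        cfgGR fmin fmax emin emax PB PR θB θR α β f e x < 0 := by
      intro x hx
      apply hball
      constructor
      · rw [Metric.mem_ball, Real.dist_eq, abs_of_nonneg (by linarith [hx.1])]
        linarith [hx.2]
      · exact le_trans hT0 hx.1
    have hlip : ∀ t : ℝ, LipschitzOnWith 1 (fun x : ℝ => -x) (univ : Set ℝ) := by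
      intro t
      apply LipschitzWith.lipschitzOnWith
      apply LipschitzWith.of_dist_le_mul
      intro x y
      rw [Real.dist_eq, Real.dist_eq, NNReal.coe_one, one_mul, neg_sub_neg, abs_sub_comm]
    have hkey : ∀ f ∈ Finset.Icc fmin fmax, ∀ e ∈ Finset.Icc emin emax,
        EqOn (θB f e) φ (Icc T (T + ε/2)) ∧ EqOn (θR f e) φ (Icc T (T + ε/2)) := by
      intro f hf e he
      constructor
      · refine ODE_solution_unique_of_mem_Icc_right (v := fun _ x => -x)
          (s := fun _ => (univ : Set ℝ)) (K := 1) (fun t _ => hlip t) ?_ ?_ (fun _ _ => mem_univ _)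
          ?_ ?_ (fun _ _ => mem_univ _) ?_
        · exact (hθBc f hf e he).mono (fun x hx => le_trans hT0 hx.1)
        · intro t ht
          have ht0 : (0:ℝ) ≤ t := le_trans hT0 ht.1
          have hder := (hsol f hf e he t ht0).1
          have hglt := (hIccsub t ⟨ht.1, ht.2.le⟩ f hf e he).1
          have hr : cfgRhsB fmin fmax emin emax PB PR θB θR α β f e t = -(θB f e t) := by
            unfold cfgRhsB
            rw [if_neg (not_lt.mpr hglt.le), if_pos hglt]
            ring
          rw [hr] at hder
          exact hder.mono (fun x hx => le_trans ht0 hx)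
        · exact hφcont.continuousOn
        · exact fun t _ => (hφ' t).hasDerivWithinAt
        · exact (hQT f hf e he).1
      · refine ODE_solution_unique_of_mem_Icc_right (v := fun _ x => -x)
          (s := fun _ => (univ : Set ℝ)) (K := 1) (fun t _ => hlip t) ?_ ?_ (fun _ _ => mem_univ _)
          ?_ ?_ (fun _ _ => mem_univ _) ?_
        · exact (hθRc f hf e he).mono (fun x hx => le_trans hT0 hx.1)
        · intro t ht
          have ht0 : (0:ℝ) ≤ t := le_trans hT0 ht.1
          have hder := (hsol f hf e he t ht0).2
          have hglt := (hIccsub t ⟨ht.1, ht.2.le⟩ f hf e he).2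
          have hr : cfgRhsR fmin fmax emin emax PB PR θB θR α β f e t = -(θR f e t) := by
            unfold cfgRhsR
            rw [if_neg (not_lt.mpr hglt.le), if_pos hglt]
            ring
          rw [hr] at hder
          exact hder.mono (fun x hx => le_trans ht0 hx)
        · exact hφcont.continuousOn
        · exact fun t _ => (hφ' t).hasDerivWithinAt
        · exact (hQT f hf e he).2
    obtain ⟨b', hb'B, hb'lt⟩ := (csInf_lt_iff hBbd hBne).mp (by rw [← hTdef]; exact hb)
    obtain ⟨hb'0, hb'nQ⟩ := hb'B
    rcases lt_or_ge b' T with hlt | hge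
    · exact hb'nQ (hbefore b' hb'0 hlt)
    · apply hb'nQ
      intro f hf e he
      have hbIcc : b' ∈ Icc T (T + ε/2) := ⟨hge, hb'lt.le⟩
      exact ⟨(hkey f hf e he).1 hbIcc, (hkey f hf e he).2 hbIcc⟩
  -- conclude
  intro f hf e he
  have hBt : Tendsto φ atTop (𝓝 0) := by
    have := Real.tendsto_exp_neg_atTop_nhds_zero.const_mul c
    simpa [φ] using this
  constructor
  · refine Tendsto.congr' ?_ hBt
    filter_upwards [eventually_ge_atTop (0:ℝ)] with t ht
    exact ((hall t ht f hf e he).1).symm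
  · refine Tendsto.congr' ?_ hBt
    filter_upwards [eventually_ge_atTop (0:ℝ)] with t ht
    exact ((hall t ht f hf e he).2).symm
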